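/- Let f, g ∈ K[[x_1,...,x_n]], let s = ord(f) ≥ 2 be the order of f, and suppose ⟨f, m^k·j(f)⟩ = ⟨g, m^k·j(g)⟩ for some k ≥ 2. Write f = h_1·g + H with H ∈ m^k·j(g). If h_1 is not a unit, then one obtains a contradiction; more precisely: if g = h_2·f + G with G ∈ m^k·j(f) and h_1 ∈ m, then f ∈ m^{k+s-1}, contradicting ord(f) = s and k ≥ 2. -/

import Mathlib

noncomputable section

/-- The formal power series ring `K[[x_1,...,x_n]]`. -/
abbrev PS (K : Type*) [Field K] (n : ℕ) := MvPowerSeries (Fin n) K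

/-- The maximal ideal `m` of `K[[x]]` (power series with zero constant term). -/
def mx (K : Type*) [Field K] (n : ℕ) : Ideal (PS K n) :=
  RingHom.ker (MvPowerSeries.constantCoeff : MvPowerSeries (Fin n) K →+* K)

/-- The `i`-th formal partial derivative of a power series. -/
def pd {K : Type*} [Field K] {n : ℕ} (i : Fin n) (f : PS K n) : PS K n :=
  fun e => (e i + 1 : ℕ) • MvPowerSeries.coeff (e + Finsupp.single i 1) f

/-- The Jacobian ideal `j(f) = ⟨∂f/∂x_1, ..., ∂f/∂x_n⟩`. -/
def jId {K : Type*} [Field K] {n : ℕ} (f : PS K n) : Ideal (PS K n) :=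
  Ideal.span (Set.range fun i => pd i f)

/-- The Tjurina ideal `tj(f) = ⟨f⟩ + j(f)`. -/
def tjId {K : Type*} [Field K] {n : ℕ} (f : PS K n) : Ideal (PS K n) :=
  Ideal.span {f} ⊔ jId f

/-- The ideal defining the `k`-th Tjurina algebra: `⟨f, m^k j(f)⟩`. -/
def TkId {K : Type*} [Field K] {n : ℕ} (k : ℕ) (f : PS K n) : Ideal (PS K n) :=
  Ideal.span {f} ⊔ (mx K n) ^ k * jId f

/-- The ideal defining the `k`-th Milnor algebra: `m^k j(f)`. -/
def MkId {K : Type*} [Field K] {n : ℕ} (k : ℕ) (f : PS K n) : Ideal (PS K n) :=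
  (mx K n) ^ k * jId f

/-- Contact equivalence: `g = u · φ(f)`. -/
def ContactEquiv {K : Type*} [Field K] {n : ℕ} (f g : PS K n) : Prop :=
  ∃ (φ : PS K n ≃ₐ[K] PS K n) (u : (PS K n)ˣ), g = (u : PS K n) * φ f

/-- Right equivalence: `g = φ(f)`. -/
def RightEquiv {K : Type*} [Field K] {n : ℕ} (f g : PS K n) : Prop :=
  ∃ φ : PS K n ≃ₐ[K] PS K n, g = φ f

/-- `f` is contact `N`-determined. -/
def ContactDetermined {K : Type*} [Field K] {n : ℕ} (N : ℕ) (f : PS K n) : Prop :=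
  ∀ g : PS K n, g - f ∈ (mx K n) ^ (N + 1) → ContactEquiv f g

/-- `f` is right `N`-determined. -/
def RightDetermined {K : Type*} [Field K] {n : ℕ} (N : ℕ) (f : PS K n) : Prop :=
  ∀ g : PS K n, g - f ∈ (mx K n) ^ (N + 1) → RightEquiv f g


open MvPowerSeries Finsupp in
private lemma deg_add {n : ℕ} (a b : Fin n →₀ ℕ) :
    Finsupp.degree (a + b) = Finsupp.degree a + Finsupp.degree b := by
  simp [Finsupp.degree_eq_weight_one, map_add]

open MvPowerSeries Finsupp in
private lemma deg_single {n : ℕ} (i : Fin n) :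
    Finsupp.degree (Finsupp.single i 1) = 1 := by
  classical
  exact Finsupp.degree_single i 1

/-- The ideal of power series of order at least `l`. -/
def OV (K : Type*) [Field K] (n l : ℕ) : Ideal (PS K n) where
  carrier := {f | ∀ d : Fin n →₀ ℕ, Finsupp.degree d < l → MvPowerSeries.coeff d f = 0}
  zero_mem' := by intro d _; simp
  add_mem' := by
    intro a b ha hb d hd
    rw [map_add, ha d hd, hb d hd, add_zero]
  smul_mem' := by
    intro c f hf d hd
    rw [smul_eq_mul, MvPowerSeries.coeff_mul]
    apply Finset.sum_eq_zero
    intro p hp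
    rw [Finset.HasAntidiagonal.mem_antidiagonal] at hp
    have h2 : Finsupp.degree p.2 ≤ Finsupp.degree d := by
      rw [← hp, deg_add]; exact Nat.le_add_left _ _
    rw [hf p.2 (lt_of_le_of_lt h2 hd), mul_zero]

lemma mem_OV {K : Type*} [Field K] {n l : ℕ} {f : PS K n} :
    f ∈ OV K n l ↔ ∀ d : Fin n →₀ ℕ, Finsupp.degree d < l → MvPowerSeries.coeff d f = 0 :=
  Iff.rfl

lemma pow_le_OV {K : Type*} [Field K] {n : ℕ} (l : ℕ) :
    (mx K n) ^ l ≤ OV K n l := by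
  induction l with
  | zero => intro f _ d hd; exact absurd hd (Nat.not_lt_zero _)
  | succ l ih =>
    rw [pow_succ]
    rw [Ideal.mul_le]
    intro r hr s hs
    intro d hd
    rw [MvPowerSeries.coeff_mul]
    apply Finset.sum_eq_zero
    intro p hp
    rw [Finset.HasAntidiagonal.mem_antidiagonal] at hp
    by_cases h1 : Finsupp.degree p.1 < l
    · rw [ih hr p.1 h1, zero_mul]
    · have hdd : Finsupp.degree p.1 + Finsupp.degree p.2 = Finsupp.degree d := by
        rw [← hp, deg_add]
      have h2 : Finsupp.degree p.2 = 0 := by omega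
      have h2' : p.2 = 0 := (Finsupp.degree_eq_zero_iff _).mp h2
      have : MvPowerSeries.coeff p.2 s = 0 := by
        rw [h2', MvPowerSeries.coeff_zero_eq_constantCoeff]
        exact RingHom.mem_ker.mp hs
      rw [this, mul_zero]

lemma OV_le_pow {K : Type*} [Field K] {n : ℕ} (l : ℕ) :
    OV K n l ≤ (mx K n) ^ l := by
  classical
  induction l with
  | zero => intro f _; rw [pow_zero, Ideal.one_eq_top]; trivial
  | succ l ih =>
    intro f hf
    set g : Fin n → PS K n := fun i c =>
      if (∀ j, j < i → c j = 0) then MvPowerSeries.coeff (c + Finsupp.single i 1) f else 0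
      with hg
    have hgi : ∀ i, g i ∈ OV K n l := by
      intro i c hc
      rw [MvPowerSeries.coeff_apply, hg]
      simp only
      split
      · apply hf
        rw [deg_add, deg_single]
        omega
      · rfl
    have hsum : f = ∑ i : Fin n, MvPowerSeries.X i * g i := by
      ext e
      rw [map_sum]
      have hterm : ∀ i : Fin n, MvPowerSeries.coeff e (MvPowerSeries.X i * g i)
          = if Finsupp.single i 1 ≤ e then
              MvPowerSeries.coeff (e - Finsupp.single i 1) (g i) else 0 := by
        intro i
        rw [MvPowerSeries.X, MvPowerSeries.coeff_monomial_mul]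
        split <;> simp
      rcases eq_or_ne e 0 with he | he
      · subst he
        have h0 : MvPowerSeries.coeff (0 : Fin n →₀ ℕ) f = 0 := hf 0 (by simp)
        rw [h0]
        symm
        apply Finset.sum_eq_zero
        intro i _
        rw [hterm i, if_neg]
        simp [Finsupp.single_le_iff]
      · have hne : e.support.Nonempty := Finsupp.support_nonempty_iff.mpr he
        set i₀ := e.support.min' hne with hi₀
        have hmem : e i₀ ≠ 0 := Finsupp.mem_support_iff.mp (e.support.min'_mem hne)
        have hmin : ∀ j, j < i₀ → e j = 0 := by
          intro j hj
          by_contra hje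
          exact absurd (e.support.min'_le j (Finsupp.mem_support_iff.mpr hje)) (not_le.mpr hj)
        have hle : Finsupp.single i₀ 1 ≤ e := by
          rw [Finsupp.single_le_iff]
          omega
        symm
        rw [Finset.sum_eq_single i₀]
        · rw [hterm i₀, if_pos hle, MvPowerSeries.coeff_apply, hg]
          simp only
          have hcond : ∀ j, j < i₀ → ((e - Finsupp.single i₀ 1 : Fin n →₀ ℕ)) j = 0 := by
            intro j hj
            rw [Finsupp.tsub_apply, Finsupp.single_apply, if_neg (by omega), hmin j hj]
            omega
          rw [if_pos hcond, tsub_add_cancel_of_le hle]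
        · intro i _ hii
          rw [hterm i]
          split
          · next hle' =>
            have hei : e i ≠ 0 := by
              have := Finsupp.single_le_iff.mp hle'
              omega
            have hi₀i : i₀ ≤ i := e.support.min'_le i (Finsupp.mem_support_iff.mpr hei)
            have hlt : i₀ < i := lt_of_le_of_ne hi₀i (Ne.symm hii)
            rw [MvPowerSeries.coeff_apply, hg]
            simp only
            rw [if_neg]
            intro hall
            have := hall i₀ hlt
            rw [Finsupp.tsub_apply, Finsupp.single_apply, if_neg (by omega)] at this
            omega
          · rfl
        · intro h
          exact absurd (Finset.mem_univ i₀) h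
    rw [hsum]
    apply Ideal.sum_mem
    intro i _
    rw [pow_succ']
    refine Ideal.mul_mem_mul ?_ (ih (hgi i))
    rw [mx, RingHom.mem_ker]
    exact MvPowerSeries.constantCoeff_X i

lemma pd_mem_OV {K : Type*} [Field K] {n : ℕ} {l : ℕ} {f : PS K n} (i : Fin n)
    (hf : f ∈ OV K n (l + 1)) : pd i f ∈ OV K n l := by
  intro d hd
  rw [MvPowerSeries.coeff_apply, pd]
  have : MvPowerSeries.coeff (d + Finsupp.single i 1) f = 0 := by
    apply hf
    rw [deg_add, deg_single]
    omega
  rw [this, smul_zero]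

lemma jId_le_pow {K : Type*} [Field K] {n : ℕ} {s : ℕ} {f : PS K n}
    (hs : 1 ≤ s) (hf : f ∈ (mx K n) ^ s) : jId f ≤ (mx K n) ^ (s - 1) := by
  rw [jId, Ideal.span_le]
  rintro _ ⟨i, rfl⟩
  apply OV_le_pow
  apply pd_mem_OV
  have hs' : s - 1 + 1 = s := by omega
  rw [hs']
  exact pow_le_OV s hf

/-- in Case 2 of the proof of the main theorem (`h₁` not a unit)
one obtains a contradiction. -/
theorem stmt_6 {K : Type*} [Field K] {n : ℕ} (f g h₁ h₂ H G : PS K n)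
    (s k : ℕ) (hs : 2 ≤ s) (hk : 2 ≤ k)
    (hf : f ∈ (mx K n) ^ s) (hf' : f ∉ (mx K n) ^ (s + 1))
    (hh₁ : h₁ ∈ mx K n)
    (hH : H ∈ (mx K n) ^ k * jId g) (hG : G ∈ (mx K n) ^ k * jId f)
    (e₁ : f = h₁ * g + H) (e₂ : g = h₂ * f + G) :
    False := by
  -- j(f) ⊆ m^(s-1)
  have hs1 : 1 ≤ s := by omega
  have hjf : jId f ≤ (mx K n) ^ (s - 1) := jId_le_pow hs1 hf
  -- G ∈ m^(k+s-1)
  have hGm : G ∈ (mx K n) ^ (k + s - 1) := by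
    have : (mx K n) ^ k * jId f ≤ (mx K n) ^ k * (mx K n) ^ (s - 1) :=
      Ideal.mul_mono le_rfl hjf
    have h2 := this hG
    rw [← pow_add] at h2
    have : k + (s - 1) = k + s - 1 := by omega
    rwa [this] at h2
  have hpow_le : ∀ a b : ℕ, a ≤ b → (mx K n) ^ b ≤ (mx K n) ^ a := fun a b hab =>
    Ideal.pow_le_pow_right hab
  -- g ∈ m^s
  have hgm : g ∈ (mx K n) ^ s := by
    rw [e₂]
    exact Ideal.add_mem _ (Ideal.mul_mem_left _ _ hf) (hpow_le s (k + s - 1) (by omega) hGm)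
  -- H ∈ m^(k+s-1)
  have hjg : jId g ≤ (mx K n) ^ (s - 1) := jId_le_pow hs1 hgm
  have hHm : H ∈ (mx K n) ^ (k + s - 1) := by
    have : (mx K n) ^ k * jId g ≤ (mx K n) ^ k * (mx K n) ^ (s - 1) :=
      Ideal.mul_mono le_rfl hjg
    have h2 := this hH
    rw [← pow_add] at h2
    have : k + (s - 1) = k + s - 1 := by omega
    rwa [this] at h2
  -- h₁ * G + H ∈ m^(s+1)
  have hkey : h₁ * G + H ∈ (mx K n) ^ (s + 1) := by
    refine Ideal.add_mem _ (Ideal.mul_mem_left _ _ ?_) (hpow_le (s + 1) (k + s - 1) (by omega) hHm)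
    exact hpow_le (s + 1) (k + s - 1) (by omega) hGm
  -- (1 - h₁h₂) f = h₁ G + H
  have heq : (1 - h₁ * h₂) * f = h₁ * G + H := by
    have := e₁
    rw [e₂] at this
    linear_combination this
  -- 1 - h₁h₂ is a unit
  have hunit : IsUnit (1 - h₁ * h₂) := by
    rw [MvPowerSeries.isUnit_iff_constantCoeff]
    have hc1 : MvPowerSeries.constantCoeff h₁ = 0 := RingHom.mem_ker.mp hh₁
    rw [map_sub, map_one, map_mul, hc1, zero_mul, sub_zero]
    exact isUnit_one
  obtain ⟨w, hw⟩ := hunit.exists_left_inv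
  have hfm : f ∈ (mx K n) ^ (s + 1) := by
    have : f = w * ((1 - h₁ * h₂) * f) := by rw [← mul_assoc, hw, one_mul]
    rw [this, heq]
    exact Ideal.mul_mem_left _ _ hkey
  exact hf' hfm
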